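/- Let A₁ ≠ A₂ be nonzero reals, D ≠ 0, B ≠ 0. Then on any interval not containing t = 0, the functions p₁(t) = B exp(3(A₂D² - A₁)/(2D(A₁-A₂)) · e^{-|A₁-A₂||t|/3}), p₂ = p₁/D, r₁ = A₁/p₁, r₂ = A₂/p₂, q₁(t) = -(A₁/3)t + Γ(t), q₂(t) = -(A₂/3)t + Γ(t), where Γ(t) = (3(A₂D² + A₁)/(2D(A₁-A₂))) sgn((A₁-A₂)t)(e^{-|A₁-A₂||t|/3} - 1), solve the two-peakon ODE system of the dispersionless two-component cubic Camassa–Holm equation. -/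

import Mathlib

noncomputable section
set_option maxHeartbeats 1000000

theorem two_peakon_aux (A₁ A₂ B D : ℝ)
    (hA : A₁ ≠ A₂) (hA₁ : A₁ ≠ 0) (hA₂ : A₂ ≠ 0) (hB : B ≠ 0) (hD : D ≠ 0)
    (p₁ p₂ r₁ r₂ Γ q₁ q₂ : ℝ → ℝ)
    (hp₁ : ∀ t, p₁ t = B * Real.exp ((3 * (A₂ * D ^ 2 - A₁) / (2 * D * (A₁ - A₂))) *
        Real.exp (-|A₁ - A₂| * |t| / 3)))
    (hp₂ : ∀ t, p₂ t = p₁ t / D)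
    (hr₁ : ∀ t, r₁ t = A₁ / p₁ t)
    (hr₂ : ∀ t, r₂ t = A₂ / p₂ t)
    (hΓ : ∀ t, Γ t = (3 * (A₂ * D ^ 2 + A₁) / (2 * D * (A₁ - A₂))) * Real.sign ((A₁ - A₂) * t) *
        (Real.exp (-|A₁ - A₂| * |t| / 3) - 1))
    (hq₁ : ∀ t, q₁ t = -(A₁ / 3) * t + Γ t)
    (hq₂ : ∀ t, q₂ t = -(A₂ / 3) * t + Γ t)
    (t : ℝ) (ht : t ≠ 0) :
      HasDerivAt p₁ ((1 / 2) * p₁ t * (p₁ t * r₂ t - p₂ t * r₁ t) *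
        Real.sign (q₁ t - q₂ t) * Real.exp (-|q₁ t - q₂ t|)) t ∧
      HasDerivAt p₂ ((1 / 2) * p₂ t * (p₂ t * r₁ t - p₁ t * r₂ t) *
        Real.sign (q₂ t - q₁ t) * Real.exp (-|q₂ t - q₁ t|)) t ∧
      HasDerivAt q₁ (-(1 / 3) * (p₁ t * r₁ t)
        - (1 / 2) * (p₁ t * r₂ t + p₂ t * r₁ t) * Real.exp (-|q₁ t - q₂ t|)) t ∧
      HasDerivAt q₂ (-(1 / 3) * (p₂ t * r₂ t)
        - (1 / 2) * (p₁ t * r₂ t + p₂ t * r₁ t) * Real.exp (-|q₂ t - q₁ t|)) t ∧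
      HasDerivAt r₁ (-(1 / 2) * r₁ t * (p₁ t * r₂ t - p₂ t * r₁ t) *
        Real.sign (q₁ t - q₂ t) * Real.exp (-|q₁ t - q₂ t|)) t ∧
      HasDerivAt r₂ (-(1 / 2) * r₂ t * (p₂ t * r₁ t - p₁ t * r₂ t) *
        Real.sign (q₂ t - q₁ t) * Real.exp (-|q₂ t - q₁ t|)) t := by
  have hAsub : A₁ - A₂ ≠ 0 := sub_ne_zero.mpr hA
  obtain ⟨τ, σ, hτ, hσ, hστ, habs, hsgn, hsq, hsq2⟩ :
      ∃ τ σ : ℝ, τ * τ = 1 ∧ σ * σ = 1 ∧ σ * τ * |A₁ - A₂| = A₁ - A₂ ∧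
        (∀ᶠ s in nhds t, |s| = τ * s) ∧
        (∀ᶠ s in nhds t, Real.sign ((A₁ - A₂) * s) = σ) ∧
        Real.sign ((A₂ - A₁) / 3 * t) = -σ ∧ Real.sign ((A₁ - A₂) / 3 * t) = σ := by
    rcases ht.lt_or_gt with htn | htp
    · rcases hAsub.lt_or_gt with hc | hc
      · refine ⟨-1, 1, by norm_num, by norm_num, ?_, ?_, ?_, ?_, ?_⟩
        · rw [abs_of_neg hc]; ring
        · filter_upwards [Iio_mem_nhds htn] with s hs
          rw [abs_of_neg (Set.mem_Iio.mp hs)]; ring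
        · filter_upwards [Iio_mem_nhds htn] with s hs
          exact Real.sign_of_pos (mul_pos_of_neg_of_neg hc (Set.mem_Iio.mp hs))
        · rw [Real.sign_of_neg (mul_neg_of_pos_of_neg (by linarith) htn)]
        · exact Real.sign_of_pos (mul_pos_of_neg_of_neg (by linarith) htn)
      · refine ⟨-1, -1, by norm_num, by norm_num, ?_, ?_, ?_, ?_, ?_⟩
        · rw [abs_of_pos hc]; ring
        · filter_upwards [Iio_mem_nhds htn] with s hs
          rw [abs_of_neg (Set.mem_Iio.mp hs)]; ring
        · filter_upwards [Iio_mem_nhds htn] with s hs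
          exact Real.sign_of_neg (mul_neg_of_pos_of_neg hc (Set.mem_Iio.mp hs))
        · rw [Real.sign_of_pos (mul_pos_of_neg_of_neg (by linarith) htn)]; norm_num
        · exact Real.sign_of_neg (mul_neg_of_pos_of_neg (by linarith) htn)
    · rcases hAsub.lt_or_gt with hc | hc
      · refine ⟨1, -1, by norm_num, by norm_num, ?_, ?_, ?_, ?_, ?_⟩
        · rw [abs_of_neg hc]; ring
        · filter_upwards [Ioi_mem_nhds htp] with s hs
          rw [abs_of_pos (Set.mem_Ioi.mp hs)]; ring
        · filter_upwards [Ioi_mem_nhds htp] with s hs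
          exact Real.sign_of_neg (mul_neg_of_neg_of_pos hc (Set.mem_Ioi.mp hs))
        · rw [Real.sign_of_pos (mul_pos (by linarith) htp)]; norm_num
        · exact Real.sign_of_neg (mul_neg_of_neg_of_pos (by linarith) htp)
      · refine ⟨1, 1, by norm_num, by norm_num, ?_, ?_, ?_, ?_, ?_⟩
        · rw [abs_of_pos hc]; ring
        · filter_upwards [Ioi_mem_nhds htp] with s hs
          rw [abs_of_pos (Set.mem_Ioi.mp hs)]; ring
        · filter_upwards [Ioi_mem_nhds htp] with s hs
          exact Real.sign_of_pos (mul_pos (by linarith) (Set.mem_Ioi.mp hs))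
        · rw [Real.sign_of_neg (mul_neg_of_neg_of_pos (by linarith) htp)]
        · exact Real.sign_of_pos (mul_pos (by linarith) htp)
  have hat : |t| = τ * t := habs.self_of_nhds
  set a := |A₁ - A₂| with ha_def
  set K := 3 * (A₂ * D ^ 2 - A₁) / (2 * D * (A₁ - A₂)) with hK
  set M := 3 * (A₂ * D ^ 2 + A₁) / (2 * D * (A₁ - A₂)) with hM
  set c := -(a * τ) / 3 with hc
  set E := Real.exp (c * t) with hE
  have ha_eq : a = σ * τ * (A₁ - A₂) := by
    linear_combination (σ * τ) * hστ + (-(a * τ * τ)) * hσ + (-a) * hτ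
  have hargt : -a * (τ * t) / 3 = c * t := by rw [hc]; ring
  have hF : HasDerivAt (fun s => Real.exp (c * s)) (E * c) t := by
    simpa using ((hasDerivAt_id t).const_mul c).exp
  have hp1d : HasDerivAt p₁ (B * (Real.exp (K * E) * (K * (E * c)))) t := by
    refine (((hF.const_mul K).exp).const_mul B).congr_of_eventuallyEq ?_
    filter_upwards [habs] with s hs
    rw [hp₁ s, hs, show -a * (τ * s) / 3 = c * s by rw [hc]; ring]
  have hP0 : p₁ t ≠ 0 := by rw [hp₁ t]; exact mul_ne_zero hB (Real.exp_ne_zero _)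
  have hp2d : HasDerivAt p₂ (B * (Real.exp (K * E) * (K * (E * c))) / D) t :=
    (hp1d.div_const D).congr_of_eventuallyEq (.of_forall fun s => by rw [hp₂ s])
  have hP20 : p₂ t ≠ 0 := by rw [hp₂ t]; exact div_ne_zero hP0 hD
  have hr1d : HasDerivAt r₁
      ((0 * p₁ t - A₁ * (B * (Real.exp (K * E) * (K * (E * c))))) / p₁ t ^ 2) t :=
    ((hasDerivAt_const t A₁).div hp1d hP0).congr_of_eventuallyEq
      (.of_forall fun s => by rw [hr₁ s]; rfl)
  have hr2d : HasDerivAt r₂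
      ((0 * p₂ t - A₂ * (B * (Real.exp (K * E) * (K * (E * c))) / D)) / p₂ t ^ 2) t :=
    ((hasDerivAt_const t A₂).div hp2d hP20).congr_of_eventuallyEq
      (.of_forall fun s => by rw [hr₂ s]; rfl)
  have hGd : HasDerivAt Γ (M * σ * (E * c)) t := by
    refine ((hF.sub_const 1).const_mul (M * σ)).congr_of_eventuallyEq ?_
    filter_upwards [habs, hsgn] with s hs1 hs2
    rw [hΓ s, hs1, hs2, show -a * (τ * s) / 3 = c * s by rw [hc]; ring]
  have hq1d : HasDerivAt q₁ (-(A₁ / 3) * 1 + M * σ * (E * c)) t :=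
    (((hasDerivAt_id t).const_mul (-(A₁ / 3))).add hGd).congr_of_eventuallyEq
      (.of_forall fun s => by rw [hq₁ s]; rfl)
  have hq2d : HasDerivAt q₂ (-(A₂ / 3) * 1 + M * σ * (E * c)) t :=
    (((hasDerivAt_id t).const_mul (-(A₂ / 3))).add hGd).congr_of_eventuallyEq
      (.of_forall fun s => by rw [hq₂ s]; rfl)
  have hqd : q₁ t - q₂ t = (A₂ - A₁) / 3 * t := by rw [hq₁ t, hq₂ t]; ring
  have hqd' : q₂ t - q₁ t = (A₁ - A₂) / 3 * t := by rw [hq₁ t, hq₂ t]; ring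
  have hs1 : Real.sign (q₁ t - q₂ t) = -σ := by rw [hqd]; exact hsq
  have hs2 : Real.sign (q₂ t - q₁ t) = σ := by rw [hqd']; exact hsq2
  have habsq : |q₁ t - q₂ t| = a * |t| / 3 := by
    rw [hqd, abs_mul, abs_div, abs_sub_comm A₂ A₁, ← ha_def,
      abs_of_pos (by norm_num : (0:ℝ) < 3)]
    ring
  have hE1 : Real.exp (-|q₁ t - q₂ t|) = E := by
    rw [habsq, hat, show -(a * (τ * t) / 3) = c * t by rw [hc]; ring, ← hE]
  have hE2 : Real.exp (-|q₂ t - q₁ t|) = E := by rw [abs_sub_comm]; exact hE1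
  have hp₁t : p₁ t = B * Real.exp (K * E) := by rw [hp₁ t, hat, hargt, ← hE]
  have hp₂t : p₂ t = B * Real.exp (K * E) / D := by rw [hp₂ t, hp₁t]
  have hr₁t : r₁ t = A₁ / (B * Real.exp (K * E)) := by rw [hr₁ t, hp₁t]
  have hr₂t : r₂ t = A₂ / (B * Real.exp (K * E) / D) := by rw [hr₂ t, hp₂t]
  have h1 : p₁ t * r₁ t = A₁ := by
    rw [hr₁ t]; field_simp
  have h2 : p₂ t * r₂ t = A₂ := by
    rw [hr₂ t]; field_simp
  have h3 : p₁ t * r₂ t = A₂ * D := by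
    rw [hr₂ t, hp₂ t]; field_simp
  have h4 : p₂ t * r₁ t = A₁ / D := by
    rw [hr₁ t, hp₂ t]; field_simp
  obtain ⟨X, hX0, hXdef⟩ : ∃ X : ℝ, X ≠ 0 ∧ Real.exp (K * E) = X :=
    ⟨_, Real.exp_ne_zero _, rfl⟩
  rw [hXdef] at hp1d hp2d hr1d hr2d hp₁t hp₂t hr₁t hr₂t
  have hPne : B * X ≠ 0 := mul_ne_zero hB hX0
  clear_value a K M c E
  clear hp₁ hp₂ hr₁ hr₂ hΓ hq₁ hq₂ habs hsgn hqd hqd' habsq ha_def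
  obtain rfl | rfl := mul_self_eq_one_iff.mp hσ <;>
    obtain rfl | rfl := mul_self_eq_one_iff.mp hτ <;>
    exact ⟨
      by rw [h3, h4, hs1, hE1, hp₁t]; convert hp1d using 1;
         rw [hc, ha_eq, hK]; field_simp <;> ring,
      by rw [h3, h4, hs2, hE2, hp₂t]; convert hp2d using 1;
         rw [hc, ha_eq, hK]; field_simp; ring,
      by rw [h1, h3, h4, hE1]; convert hq1d using 1;
         rw [hc, ha_eq, hM]; field_simp; ring,
      by rw [h2, h3, h4, hE2]; convert hq2d using 1;
         rw [hc, ha_eq, hM]; field_simp; ring,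
      by rw [h3, h4, hs1, hE1, hr₁t]; convert hr1d using 1;
         rw [hp₁t, hc, ha_eq, hK]; field_simp; ring,
      by rw [h3, h4, hs2, hE2, hr₂t]; convert hr2d using 1;
         rw [hp₂t, hc, ha_eq, hK]; field_simp; ring⟩

/-- Distinct-constants (`A₁ ≠ A₂`) explicit two-peakon solution: away from the collision
time `t = 0`, the given explicit functions solve the two-peakon ODE system of the
dispersionless two-component cubic Camassa–Holm equation. -/
theorem two_peakon_explicit_solution_distinct_constants (A₁ A₂ B D : ℝ)
    (hA : A₁ ≠ A₂) (hA₁ : A₁ ≠ 0) (hA₂ : A₂ ≠ 0) (hB : B ≠ 0) (hD : D ≠ 0) :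
    let p₁ : ℝ → ℝ := fun t =>
      B * Real.exp ((3 * (A₂ * D ^ 2 - A₁) / (2 * D * (A₁ - A₂))) *
        Real.exp (-|A₁ - A₂| * |t| / 3))
    let p₂ : ℝ → ℝ := fun t => p₁ t / D
    let r₁ : ℝ → ℝ := fun t => A₁ / p₁ t
    let r₂ : ℝ → ℝ := fun t => A₂ / p₂ t
    let Γ : ℝ → ℝ := fun t =>
      (3 * (A₂ * D ^ 2 + A₁) / (2 * D * (A₁ - A₂))) * Real.sign ((A₁ - A₂) * t) *
        (Real.exp (-|A₁ - A₂| * |t| / 3) - 1)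
    let q₁ : ℝ → ℝ := fun t => -(A₁ / 3) * t + Γ t
    let q₂ : ℝ → ℝ := fun t => -(A₂ / 3) * t + Γ t
    ∀ t : ℝ, t ≠ 0 →
      HasDerivAt p₁ ((1 / 2) * p₁ t * (p₁ t * r₂ t - p₂ t * r₁ t) *
        Real.sign (q₁ t - q₂ t) * Real.exp (-|q₁ t - q₂ t|)) t ∧
      HasDerivAt p₂ ((1 / 2) * p₂ t * (p₂ t * r₁ t - p₁ t * r₂ t) *
        Real.sign (q₂ t - q₁ t) * Real.exp (-|q₂ t - q₁ t|)) t ∧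
      HasDerivAt q₁ (-(1 / 3) * (p₁ t * r₁ t)
        - (1 / 2) * (p₁ t * r₂ t + p₂ t * r₁ t) * Real.exp (-|q₁ t - q₂ t|)) t ∧
      HasDerivAt q₂ (-(1 / 3) * (p₂ t * r₂ t)
        - (1 / 2) * (p₁ t * r₂ t + p₂ t * r₁ t) * Real.exp (-|q₂ t - q₁ t|)) t ∧
      HasDerivAt r₁ (-(1 / 2) * r₁ t * (p₁ t * r₂ t - p₂ t * r₁ t) *
        Real.sign (q₁ t - q₂ t) * Real.exp (-|q₁ t - q₂ t|)) t ∧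
      HasDerivAt r₂ (-(1 / 2) * r₂ t * (p₂ t * r₁ t - p₁ t * r₂ t) *
        Real.sign (q₂ t - q₁ t) * Real.exp (-|q₂ t - q₁ t|)) t := by
  intro p₁ p₂ r₁ r₂ Γ q₁ q₂ t ht
  exact two_peakon_aux A₁ A₂ B D hA hA₁ hA₂ hB hD p₁ p₂ r₁ r₂ Γ q₁ q₂
    (fun _ => rfl) (fun _ => rfl) (fun _ => rfl) (fun _ => rfl) (fun _ => rfl)
    (fun _ => rfl) (fun _ => rfl) t ht
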